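/- Let Π be a probability measure on ℝ and let g₂(p) = ∫_ℝ (1/2)[exp(h·cv₂(p) − h²/2) + exp(−h·cv₂(p) − h²/2)] dΠ(h). Then g₂ is completely monotone on (0,1): for every integer k ≥ 0 and every p ∈ (0,1), 0 ≤ (−1)^k g₂^{(k)}(p). -/

import Mathlib

open MeasureTheory

/-- The standard normal density φ(x) = (2π)^{-1/2} exp(-x²/2). -/
noncomputable def stdNormalPdf (x : ℝ) : ℝ :=
  (Real.sqrt (2 * Real.pi))⁻¹ * Real.exp (-x ^ 2 / 2)

/-- The standard normal CDF Φ(x) = ∫_{-∞}^x φ(t) dt. -/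
noncomputable def stdNormalCdf (x : ℝ) : ℝ :=
  ∫ t in Set.Iic x, stdNormalPdf t


open Real Set

lemma pdf_pos (x : ℝ) : 0 < stdNormalPdf x := by
  unfold stdNormalPdf
  positivity

lemma pdf_continuous : Continuous stdNormalPdf := by
  unfold stdNormalPdf
  continuity

lemma pdf_integrable : Integrable stdNormalPdf := by
  have h : Integrable (fun x : ℝ => Real.exp (-(1/2) * x ^ 2)) := integrable_exp_neg_mul_sq (by norm_num)
  have := h.const_mul (Real.sqrt (2 * Real.pi))⁻¹
  refine this.congr ?_
  filter_upwards with x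
  unfold stdNormalPdf
  ring_nf

lemma cdf_hasDerivAt (x : ℝ) : HasDerivAt stdNormalCdf (stdNormalPdf x) x := by
  have key : ∀ y : ℝ, stdNormalCdf y = stdNormalCdf 0 + ∫ t in (0:ℝ)..y, stdNormalPdf t := by
    intro y
    have := intervalIntegral.integral_Iic_sub_Iic (pdf_integrable.integrableOn (s := Iic (0:ℝ)))
      (pdf_integrable.integrableOn (s := Iic y))
    unfold stdNormalCdf
    linarith [this]
  have h2 : HasDerivAt (fun y => stdNormalCdf 0 + ∫ t in (0:ℝ)..y, stdNormalPdf t)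
      (stdNormalPdf x) x := by
    exact ((pdf_continuous.integral_hasStrictDerivAt 0 x).hasDerivAt).const_add _
  exact h2.congr_of_eventuallyEq (Filter.Eventually.of_forall fun y => key y)

lemma cdf_strictMono : StrictMono stdNormalCdf := by
  have : ∀ x, HasDerivAt stdNormalCdf (stdNormalPdf x) x := cdf_hasDerivAt
  apply strictMono_of_deriv_pos
  intro x
  rw [(this x).deriv]
  exact pdf_pos x

lemma cdf_zero : stdNormalCdf 0 = 1 / 2 := by
  have htot : (∫ x, stdNormalPdf x) = 1 := by
    have : (∫ x : ℝ, Real.exp (-(1/2) * x ^ 2)) = Real.sqrt (Real.pi / (1/2)) :=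
      integral_gaussian (1/2)
    unfold stdNormalPdf
    rw [MeasureTheory.integral_const_mul]
    have heq : (∫ x : ℝ, Real.exp (-x ^ 2 / 2)) = ∫ x : ℝ, Real.exp (-(1/2) * x ^ 2) := by
      congr 1; funext x; ring_nf
    rw [heq, this]
    rw [inv_mul_eq_one₀ (by positivity)]
    rw [show Real.pi / (1/2) = 2 * Real.pi by ring]
  have hsplit : stdNormalCdf 0 + (∫ t in Ioi (0:ℝ), stdNormalPdf t) = 1 := by
    rw [← htot]
    exact intervalIntegral.integral_Iic_add_Ioi pdf_integrable.integrableOn pdf_integrable.integrableOn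
  have hsym : (∫ t in Ioi (0:ℝ), stdNormalPdf t) = stdNormalCdf 0 := by
    have h1 : (∫ t in Ioi (0:ℝ), stdNormalPdf (-t)) = ∫ t in Iic (-(0:ℝ)), stdNormalPdf t :=
      integral_comp_neg_Ioi 0 stdNormalPdf
    have h2 : (∫ t in Ioi (0:ℝ), stdNormalPdf (-t)) = ∫ t in Ioi (0:ℝ), stdNormalPdf t := by
      congr 1; funext t; unfold stdNormalPdf; ring_nf
    unfold stdNormalCdf
    rw [← h2, h1]; norm_num
  linarith

section CV
variable {cv : ℝ → ℝ} (hcv : ∀ p ∈ Set.Ioo (0 : ℝ) 1, stdNormalCdf (cv p) = 1 - p / 2)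
include hcv

lemma cv_pos {p : ℝ} (hp : p ∈ Set.Ioo (0:ℝ) 1) : 0 < cv p := by
  have h1 : stdNormalCdf 0 < stdNormalCdf (cv p) := by
    rw [cdf_zero, hcv p hp]
    obtain ⟨_, h2⟩ := hp
    linarith
  exact cdf_strictMono.lt_iff_lt.mp h1

lemma cv_continuousAt {p : ℝ} (hp : p ∈ Set.Ioo (0:ℝ) 1) : ContinuousAt cv p := by
  rw [Metric.continuousAt_iff]
  intro ε hε
  obtain ⟨hp0, hp1⟩ := hp
  -- find δ such that q near p implies bound
  have hlt : stdNormalCdf (cv p - ε) < 1 - p / 2 := by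
    rw [← hcv p ⟨hp0, hp1⟩]; exact cdf_strictMono (by linarith)
  have hgt : 1 - p / 2 < stdNormalCdf (cv p + ε) := by
    rw [← hcv p ⟨hp0, hp1⟩]; exact cdf_strictMono (by linarith)
  obtain ⟨a, ha⟩ : ∃ a, a = (1 - p/2) - stdNormalCdf (cv p - ε) := ⟨_, rfl⟩
  obtain ⟨b, hb⟩ : ∃ b, b = stdNormalCdf (cv p + ε) - (1 - p/2) := ⟨_, rfl⟩
  have hap : 0 < a := by linarith
  have hbp : 0 < b := by linarith
  refine ⟨min (min (2*a) (2*b)) (min p (1 - p)), by simp [lt_min_iff]; exact ⟨⟨hap, hbp⟩, hp0, by linarith⟩, ?_⟩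
  intro q hq
  rw [Real.dist_eq] at hq ⊢
  have hq1 : |q - p| < 2*a := lt_of_lt_of_le hq (le_trans (min_le_left _ _) (min_le_left _ _))
  have hq2 : |q - p| < 2*b := lt_of_lt_of_le hq (le_trans (min_le_left _ _) (min_le_right _ _))
  have hq3 : |q - p| < p := lt_of_lt_of_le hq (le_trans (min_le_right _ _) (min_le_left _ _))
  have hq4 : |q - p| < 1 - p := lt_of_lt_of_le hq (le_trans (min_le_right _ _) (min_le_right _ _))
  rw [abs_lt] at hq1 hq2 hq3 hq4
  have hqIoo : q ∈ Set.Ioo (0:ℝ) 1 := ⟨by linarith, by linarith⟩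
  have hlow : stdNormalCdf (cv p - ε) < stdNormalCdf (cv q) := by
    rw [hcv q hqIoo]; linarith
  have hhigh : stdNormalCdf (cv q) < stdNormalCdf (cv p + ε) := by
    rw [hcv q hqIoo]; linarith
  have l1 : cv p - ε < cv q := cdf_strictMono.lt_iff_lt.mp hlow
  have l2 : cv q < cv p + ε := cdf_strictMono.lt_iff_lt.mp hhigh
  rw [abs_lt]; constructor <;> linarith

lemma cv_hasDerivAt {p : ℝ} (hp : p ∈ Set.Ioo (0:ℝ) 1) :
    HasDerivAt cv (-(2 * stdNormalPdf (cv p)))⁻¹ p := by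
  have hf : HasDerivAt (fun x => 2 * (1 - stdNormalCdf x)) (-(2 * stdNormalPdf (cv p))) (cv p) := by
    have := ((cdf_hasDerivAt (cv p)).const_sub 1).const_mul (2:ℝ)
    exact this.congr_deriv (by ring)
  refine HasDerivAt.of_local_left_inverse (cv_continuousAt hcv hp) hf (by
    have := pdf_pos (cv p); intro h; nlinarith) ?_
  have : Set.Ioo (0:ℝ) 1 ∈ nhds p := (isOpen_Ioo).mem_nhds hp
  filter_upwards [this] with q hq
  rw [hcv q hq]; ring

end CV

/-- Cone of functions (in variables h, c) used in the complete monotonicity induction. -/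
inductive MyCone : (ℝ → ℝ → ℝ) → Prop
  | P (j : ℕ) : MyCone (fun h c => c ^ j * (Real.exp (h * c) + Real.exp (-(h * c))))
  | M (j : ℕ) : MyCone (fun h c => c ^ j * (h * (Real.exp (h * c) - Real.exp (-(h * c)))))
  | add {s t} : MyCone s → MyCone t → MyCone (fun h c => s h c + t h c)
  | smul {s} (a : ℝ) (ha : 0 ≤ a) : MyCone s → MyCone (fun h c => a * s h c)
  | mulh2 {s} : MyCone s → MyCone (fun h c => h ^ 2 * s h c)
  | mulc {s} : MyCone s → MyCone (fun h c => c * s h c)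

lemma myCone_nonneg {s} (hs : MyCone s) : ∀ h c : ℝ, 0 ≤ c → 0 ≤ s h c := by
  induction hs with
  | P j => intro h c hc; positivity
  | M j =>
    intro h c hc
    have key : 0 ≤ h * (Real.exp (h * c) - Real.exp (-(h * c))) := by
      rcases le_or_gt 0 h with h0 | h0
      · have : Real.exp (-(h*c)) ≤ Real.exp (h*c) := by
          apply Real.exp_le_exp.mpr; nlinarith
        nlinarith
      · have : Real.exp (h*c) ≤ Real.exp (-(h*c)) := by
          apply Real.exp_le_exp.mpr; nlinarith
        nlinarith
    positivity
  | add hs ht ihs iht => intro h c hc; exact add_nonneg (ihs h c hc) (iht h c hc)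
  | smul a ha hs ih => intro h c hc; exact mul_nonneg ha (ih h c hc)
  | mulh2 hs ih => intro h c hc; exact mul_nonneg (sq_nonneg h) (ih h c hc)
  | mulc hs ih => intro h c hc; exact mul_nonneg hc (ih h c hc)

lemma myCone_continuous {s} (hs : MyCone s) : Continuous (fun q : ℝ × ℝ => s q.1 q.2) := by
  induction hs with
  | P j => fun_prop
  | M j => fun_prop
  | add hs ht ihs iht => exact ihs.add iht
  | smul a ha hs ih => exact continuous_const.mul ih
  | mulh2 hs ih => exact (continuous_fst.pow 2).mul ih
  | mulc hs ih => exact continuous_snd.mul ih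

lemma myCone_hasDerivAt {s} (hs : MyCone s) :
    ∃ s', MyCone s' ∧ ∀ h c : ℝ, HasDerivAt (s h) (s' h c) c := by
  induction hs with
  | P j =>
    refine ⟨fun h c => (j:ℝ) * (c ^ (j-1) * (Real.exp (h * c) + Real.exp (-(h * c))))
      + c ^ j * (h * (Real.exp (h * c) - Real.exp (-(h * c)))),
      MyCone.add (MyCone.smul _ (by positivity) (MyCone.P (j-1))) (MyCone.M j), ?_⟩
    intro h c
    have h1 : HasDerivAt (fun c : ℝ => c ^ j) ((j:ℝ) * c ^ (j-1)) c := hasDerivAt_pow j c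
    have h2 : HasDerivAt (fun c : ℝ => Real.exp (h * c) + Real.exp (-(h * c)))
        (h * Real.exp (h * c) + (-h) * Real.exp (-(h * c))) c := by
      have e1 : HasDerivAt (fun c : ℝ => Real.exp (h * c)) (h * Real.exp (h*c)) c := by
        simpa [mul_comm] using ((hasDerivAt_id c).const_mul h).exp
      have e2 : HasDerivAt (fun c : ℝ => Real.exp (-(h * c))) ((-h) * Real.exp (-(h*c))) c := by
        simpa [mul_comm] using (((hasDerivAt_id c).const_mul h).neg).exp
      exact e1.add e2
    have := h1.mul h2
    exact this.congr_deriv (by ring)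
  | M j =>
    refine ⟨fun h c => (j:ℝ) * (c ^ (j-1) * (h * (Real.exp (h * c) - Real.exp (-(h * c)))))
      + h^2 * (c ^ j * (Real.exp (h * c) + Real.exp (-(h * c)))),
      MyCone.add (MyCone.smul _ (by positivity) (MyCone.M (j-1))) (MyCone.mulh2 (MyCone.P j)), ?_⟩
    intro h c
    have h1 : HasDerivAt (fun c : ℝ => c ^ j) ((j:ℝ) * c ^ (j-1)) c := hasDerivAt_pow j c
    have h2 : HasDerivAt (fun c : ℝ => h * (Real.exp (h * c) - Real.exp (-(h * c))))
        (h * (h * Real.exp (h * c) - (-h) * Real.exp (-(h * c)))) c := by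
      have e1 : HasDerivAt (fun c : ℝ => Real.exp (h * c)) (h * Real.exp (h*c)) c := by
        simpa [mul_comm] using ((hasDerivAt_id c).const_mul h).exp
      have e2 : HasDerivAt (fun c : ℝ => Real.exp (-(h * c))) ((-h) * Real.exp (-(h*c))) c := by
        simpa [mul_comm] using (((hasDerivAt_id c).const_mul h).neg).exp
      exact (e1.sub e2).const_mul h
    have := h1.mul h2
    exact this.congr_deriv (by ring)
  | add hs ht ihs iht =>
    obtain ⟨s', hs', hds⟩ := ihs
    obtain ⟨t', ht', hdt⟩ := iht
    exact ⟨fun h c => s' h c + t' h c, MyCone.add hs' ht', fun h c => (hds h c).add (hdt h c)⟩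
  | smul a ha hs ih =>
    obtain ⟨s', hs', hds⟩ := ih
    exact ⟨fun h c => a * s' h c, MyCone.smul a ha hs', fun h c => (hds h c).const_mul a⟩
  | mulh2 hs ih =>
    obtain ⟨s', hs', hds⟩ := ih
    exact ⟨fun h c => h^2 * s' h c, MyCone.mulh2 hs', fun h c => (hds h c).const_mul _⟩
  | @mulc t ht ih =>
    obtain ⟨s', hs', hds⟩ := ih
    refine ⟨fun h c => t h c + c * s' h c, MyCone.add ht (MyCone.mulc hs'), fun h c => ?_⟩
    have := (hasDerivAt_id c).mul (hds h c)
    exact this.congr_deriv (by simp)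

lemma myCone_bound {s} (hs : MyCone s) (C : ℝ) (hC : 0 ≤ C) :
    ∃ M k, 0 ≤ M ∧ ∀ h c : ℝ, 0 ≤ c → c ≤ C →
      |s h c| ≤ M * (1 + h ^ 2) ^ k * Real.exp (C * |h|) := by
  induction hs with
  | P j =>
    refine ⟨2 * C ^ j, 0, by positivity, fun h c hc hcC => ?_⟩
    have e1 : Real.exp (h * c) ≤ Real.exp (C * |h|) := by
      apply Real.exp_le_exp.mpr
      calc h * c ≤ |h| * c := by nlinarith [le_abs_self h]
        _ ≤ |h| * C := by nlinarith [abs_nonneg h]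
        _ = C * |h| := by ring
    have e2 : Real.exp (-(h * c)) ≤ Real.exp (C * |h|) := by
      apply Real.exp_le_exp.mpr
      calc -(h * c) = (-h) * c := by ring
        _ ≤ |h| * c := by nlinarith [neg_le_abs h]
        _ ≤ |h| * C := by nlinarith [abs_nonneg h]
        _ = C * |h| := by ring
    have hnn : 0 ≤ c ^ j * (Real.exp (h * c) + Real.exp (-(h * c))) := by positivity
    rw [abs_of_nonneg hnn]
    have : c ^ j ≤ C ^ j := pow_le_pow_left₀ hc hcC j
    calc c ^ j * (Real.exp (h * c) + Real.exp (-(h * c)))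
        ≤ C ^ j * (Real.exp (C*|h|) + Real.exp (C*|h|)) := by
          apply mul_le_mul this (by linarith) (by positivity) (by positivity)
      _ = 2 * C ^ j * (1 + h^2)^0 * Real.exp (C * |h|) := by ring
  | M j =>
    refine ⟨2 * C ^ j, 1, by positivity, fun h c hc hcC => ?_⟩
    show |c ^ j * (h * (Real.exp (h * c) - Real.exp (-(h * c))))| ≤ _
    have e1 : Real.exp (h * c) ≤ Real.exp (C * |h|) := by
      apply Real.exp_le_exp.mpr
      calc h * c ≤ |h| * c := by nlinarith [le_abs_self h]
        _ ≤ |h| * C := by nlinarith [abs_nonneg h]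
        _ = C * |h| := by ring
    have e2 : Real.exp (-(h * c)) ≤ Real.exp (C * |h|) := by
      apply Real.exp_le_exp.mpr
      calc -(h * c) = (-h) * c := by ring
        _ ≤ |h| * c := by nlinarith [neg_le_abs h]
        _ ≤ |h| * C := by nlinarith [abs_nonneg h]
        _ = C * |h| := by ring
    have hh : |h| ≤ 1 + h^2 := by nlinarith [sq_nonneg (|h| - 1), sq_abs h]
    have h2 : |Real.exp (h * c) - Real.exp (-(h * c))| ≤ Real.exp (C*|h|) + Real.exp (C*|h|) := by
      refine (abs_sub _ _).trans ?_
      rw [abs_of_nonneg (Real.exp_pos _).le, abs_of_nonneg (Real.exp_pos _).le]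
      exact add_le_add e1 e2
    have h1 : |c ^ j| ≤ C ^ j := by
      rw [abs_of_nonneg (by positivity)]; exact pow_le_pow_left₀ hc hcC j
    calc |c ^ j * (h * (Real.exp (h * c) - Real.exp (-(h * c))))|
        = |c ^ j| * (|h| * |Real.exp (h * c) - Real.exp (-(h * c))|) := by
          rw [abs_mul, abs_mul]
      _ ≤ C ^ j * ((1 + h^2) * (Real.exp (C*|h|) + Real.exp (C*|h|))) := by
          apply mul_le_mul h1 ?_ (by positivity) (by positivity)
          apply mul_le_mul hh h2 (abs_nonneg _) (by nlinarith [sq_nonneg h])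
      _ = 2 * C ^ j * (1 + h^2) ^ 1 * Real.exp (C * |h|) := by ring
  | @add s t hs ht ihs iht =>
    obtain ⟨M1, k1, hM1, hb1⟩ := ihs
    obtain ⟨M2, k2, hM2, hb2⟩ := iht
    refine ⟨M1 + M2, max k1 k2, by positivity, fun h c hc hcC => ?_⟩
    show |s h c + t h c| ≤ _
    have e1 : (1+h^2)^k1 ≤ (1+h^2)^(max k1 k2) :=
      pow_le_pow_right₀ (by nlinarith [sq_nonneg h]) (le_max_left _ _)
    have e2 : (1+h^2)^k2 ≤ (1+h^2)^(max k1 k2) :=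
      pow_le_pow_right₀ (by nlinarith [sq_nonneg h]) (le_max_right _ _)
    calc |s h c + t h c| ≤ |s h c| + |t h c| := abs_add_le _ _
      _ ≤ M1 * (1+h^2)^k1 * Real.exp (C*|h|) + M2 * (1+h^2)^k2 * Real.exp (C*|h|) :=
          add_le_add (hb1 h c hc hcC) (hb2 h c hc hcC)
      _ ≤ (M1 + M2) * (1+h^2)^(max k1 k2) * Real.exp (C*|h|) := by
          have p1 : M1 * (1+h^2)^k1 ≤ M1 * (1+h^2)^(max k1 k2) :=
            mul_le_mul_of_nonneg_left e1 hM1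
          have p2 : M2 * (1+h^2)^k2 ≤ M2 * (1+h^2)^(max k1 k2) :=
            mul_le_mul_of_nonneg_left e2 hM2
          nlinarith [Real.exp_pos (C*|h|), (Real.exp_pos (C*|h|)).le]
  | @smul s a ha hs ih =>
    obtain ⟨M, k, hM, hb⟩ := ih
    refine ⟨a * M, k, by positivity, fun h c hc hcC => ?_⟩
    show |a * s h c| ≤ _
    rw [abs_mul, abs_of_nonneg ha]
    calc a * |s h c| ≤ a * (M * (1+h^2)^k * Real.exp (C*|h|)) :=
          mul_le_mul_of_nonneg_left (hb h c hc hcC) ha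
      _ = a * M * (1+h^2)^k * Real.exp (C*|h|) := by ring
  | @mulh2 s hs ih =>
    obtain ⟨M, k, hM, hb⟩ := ih
    refine ⟨M, k + 1, hM, fun h c hc hcC => ?_⟩
    show |h^2 * s h c| ≤ _
    rw [abs_mul, abs_of_nonneg (sq_nonneg h)]
    have h1 : h^2 ≤ 1 + h^2 := by nlinarith
    calc h^2 * |s h c| ≤ (1+h^2) * (M * (1+h^2)^k * Real.exp (C*|h|)) := by
          apply mul_le_mul h1 (hb h c hc hcC) (abs_nonneg _) (by nlinarith [sq_nonneg h])
      _ = M * (1+h^2)^(k+1) * Real.exp (C*|h|) := by ring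
  | @mulc s hs ih =>
    obtain ⟨M, k, hM, hb⟩ := ih
    refine ⟨M * C, k, by positivity, fun h c hc hcC => ?_⟩
    show |c * s h c| ≤ _
    rw [abs_mul, abs_of_nonneg hc]
    calc c * |s h c| ≤ C * (M * (1+h^2)^k * Real.exp (C*|h|)) := by
          apply mul_le_mul hcC (hb h c hc hcC) (abs_nonneg _) hC
      _ = M * C * (1+h^2)^k * Real.exp (C*|h|) := by ring

lemma global_bound (M : ℝ) (k : ℕ) (C : ℝ) (hM : 0 ≤ M) (hC : 0 ≤ C) :
    ∃ M', 0 ≤ M' ∧ ∀ h : ℝ,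
      M * (1 + h ^ 2) ^ k * Real.exp (C * |h|) * Real.exp (-h ^ 2 / 2) ≤ M' := by
  refine ⟨M * (8 ^ k * (Nat.factorial k : ℝ)) * Real.exp (1/8 + 2*C^2), by positivity, fun h => ?_⟩
  have h1 : (1 + h ^ 2) ^ k ≤ 8 ^ k * (Nat.factorial k : ℝ) * Real.exp ((1 + h ^ 2) / 8) := by
    have hx : (0:ℝ) ≤ (1 + h ^ 2) / 8 := by positivity
    have h0 := Real.pow_div_factorial_le_exp _ hx k
    rw [div_pow, div_div, div_le_iff₀ (by positivity)] at h0
    calc (1+h^2)^k ≤ Real.exp ((1+h^2)/8) * ((8:ℝ)^k * (Nat.factorial k : ℝ)) := h0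
      _ = 8^k * (Nat.factorial k:ℝ) * Real.exp ((1+h^2)/8) := by ring
  have h2 : Real.exp (C * |h|) ≤ Real.exp (2*C^2 + h^2/8) := by
    apply Real.exp_le_exp.mpr
    nlinarith [sq_nonneg (|h| - 4*C), sq_abs h]
  have h3 : Real.exp ((1+h^2)/8) * Real.exp (2*C^2 + h^2/8) * Real.exp (-h^2/2)
      ≤ Real.exp (1/8 + 2*C^2) := by
    rw [← Real.exp_add, ← Real.exp_add]
    apply Real.exp_le_exp.mpr
    nlinarith [sq_nonneg h]
  calc M * (1+h^2)^k * Real.exp (C*|h|) * Real.exp (-h^2/2)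
      ≤ M * (8^k * (Nat.factorial k:ℝ) * Real.exp ((1+h^2)/8)) * Real.exp (2*C^2+h^2/8)
          * Real.exp (-h^2/2) := by
        have e1 : M * (1+h^2)^k ≤ M * (8^k*(Nat.factorial k:ℝ)*Real.exp ((1+h^2)/8)) :=
          mul_le_mul_of_nonneg_left h1 hM
        exact mul_le_mul (mul_le_mul e1 h2 (Real.exp_pos _).le (by positivity))
          (le_refl (Real.exp (-h^2/2))) (Real.exp_pos _).le (by positivity)
    _ = M * (8^k*(Nat.factorial k:ℝ))
          * (Real.exp ((1+h^2)/8) * Real.exp (2*C^2+h^2/8) * Real.exp (-h^2/2)) := by ring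
    _ ≤ M * (8^k*(Nat.factorial k:ℝ)) * Real.exp (1/8+2*C^2) :=
        mul_le_mul_of_nonneg_left h3 (by positivity)

lemma pdf_anti {x y : ℝ} (hx : 0 ≤ x) (hxy : x ≤ y) : stdNormalPdf y ≤ stdNormalPdf x := by
  unfold stdNormalPdf
  have : Real.exp (-y^2/2) ≤ Real.exp (-x^2/2) := by
    apply Real.exp_le_exp.mpr; nlinarith
  have h0 : (0:ℝ) < (Real.sqrt (2*Real.pi))⁻¹ := by positivity
  nlinarith

lemma pdf_hasDerivAt (x : ℝ) : HasDerivAt stdNormalPdf (-x * stdNormalPdf x) x := by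
  have h1 : HasDerivAt (fun x : ℝ => -x^2/2) (-x) x := by
    have := ((hasDerivAt_pow 2 x).neg).div_const 2
    exact this.congr_deriv (by norm_num; ring)
  have := (h1.exp).const_mul (Real.sqrt (2*Real.pi))⁻¹
  unfold stdNormalPdf
  exact this.congr_deriv (by ring)

lemma inv_pdf_pow_hasDerivAt (k : ℕ) (x : ℝ) :
    HasDerivAt (fun x => ((stdNormalPdf x)⁻¹) ^ k) ((k:ℝ) * x * ((stdNormalPdf x)⁻¹) ^ k) x := by
  have hne : stdNormalPdf x ≠ 0 := (pdf_pos x).ne'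
  have hinv : HasDerivAt (fun x => (stdNormalPdf x)⁻¹) (x * (stdNormalPdf x)⁻¹) x := by
    have := (pdf_hasDerivAt x).inv hne
    exact this.congr_deriv (by field_simp)
  have := hinv.pow k
  refine this.congr_deriv ?_
  rcases k with _ | k
  · simp
  · simp only [Nat.add_sub_cancel, pow_succ]
    push_cast
    ring


/-- if Π is a probability measure on ℝ, cv₂(p) = Φ⁻¹(1−p/2) on (0,1), and
g₂(p) = ∫ (1/2)[exp(h·cv₂(p) − h²/2) + exp(−h·cv₂(p) − h²/2)] dΠ(h), then g₂ is
completely monotone on (0,1): for every k ≥ 0 and p ∈ (0,1), 0 ≤ (−1)^k g₂^{(k)}(p). -/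
theorem stmt_6
    (Pi : Measure ℝ) [IsProbabilityMeasure Pi]
    (cv : ℝ → ℝ) (hcv : ∀ p ∈ Set.Ioo (0 : ℝ) 1, stdNormalCdf (cv p) = 1 - p / 2)
    (g₂ : ℝ → ℝ)
    (hg₂ : ∀ p : ℝ, g₂ p =
      ∫ h, (1 / 2) * (Real.exp (h * cv p - h ^ 2 / 2) +
        Real.exp (-(h * cv p) - h ^ 2 / 2)) ∂Pi) :
    ∀ k : ℕ, ∀ p ∈ Set.Ioo (0 : ℝ) 1,
      0 ≤ (-1 : ℝ) ^ k * iteratedDeriv k g₂ p := by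
  -- continuity in h of the integrand family, for any cone element
  have cont_h : ∀ {s : ℝ → ℝ → ℝ}, MyCone s → ∀ (c : ℝ) (k : ℕ),
      Continuous (fun h : ℝ => Real.exp (-h^2/2) * s h c * ((stdNormalPdf c)⁻¹) ^ k) := by
    intro s hs c k
    have hcont : Continuous (fun h : ℝ => s h c) :=
      (myCone_continuous hs).comp (continuous_id.prodMk continuous_const)
    fun_prop
  -- integrability with a constant bound for the integrand family
  have integrand_int : ∀ {s : ℝ → ℝ → ℝ}, MyCone s → ∀ (c : ℝ), 0 ≤ c → ∀ (k : ℕ),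
      Integrable (fun h : ℝ => Real.exp (-h^2/2) * s h c * ((stdNormalPdf c)⁻¹) ^ k) Pi := by
    intro s hs c hc k
    obtain ⟨M, K, hM, hb⟩ := myCone_bound hs c hc
    obtain ⟨M', hM', hgb⟩ := global_bound M K c hM hc
    refine Integrable.mono' (integrable_const (M' * ((stdNormalPdf c)⁻¹) ^ k))
      (cont_h hs c k).aestronglyMeasurable (Filter.Eventually.of_forall fun h => ?_)
    have h1 : |Real.exp (-h^2/2) * s h c * ((stdNormalPdf c)⁻¹) ^ k|
        = Real.exp (-h^2/2) * |s h c| * ((stdNormalPdf c)⁻¹) ^ k := by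
      rw [abs_mul, abs_mul, abs_of_nonneg (Real.exp_pos _).le,
        abs_of_nonneg (pow_nonneg (inv_nonneg.mpr (pdf_pos c).le) k)]
    rw [Real.norm_eq_abs, h1]
    have h2 : Real.exp (-h^2/2) * |s h c| ≤ M' := by
      have := hb h c hc le_rfl
      calc Real.exp (-h^2/2) * |s h c|
          ≤ Real.exp (-h^2/2) * (M * (1+h^2)^K * Real.exp (c*|h|)) :=
            mul_le_mul_of_nonneg_left this (Real.exp_pos _).le
        _ = M * (1+h^2)^K * Real.exp (c*|h|) * Real.exp (-h^2/2) := by ring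
        _ ≤ M' := hgb h
    exact mul_le_mul_of_nonneg_right h2 (pow_nonneg (inv_nonneg.mpr (pdf_pos c).le) k)
  -- main induction
  have main : ∀ k : ℕ, ∃ s, MyCone s ∧ ∀ p ∈ Set.Ioo (0:ℝ) 1,
      iteratedDeriv k g₂ p = (-1:ℝ)^k *
        ∫ h, Real.exp (-h^2/2) * s h (cv p) * ((stdNormalPdf (cv p))⁻¹) ^ k ∂Pi := by
    intro k
    induction k with
    | zero =>
      refine ⟨fun h c => (1/2) * (c ^ 0 * (Real.exp (h*c) + Real.exp (-(h*c)))),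
        MyCone.smul _ (by norm_num) (MyCone.P 0), fun p hp => ?_⟩
      rw [iteratedDeriv_zero, hg₂ p, pow_zero, one_mul]
      apply integral_congr_ae
      filter_upwards with h
      rw [show h * cv p - h^2/2 = -h^2/2 + h * cv p by ring,
        show -(h * cv p) - h^2/2 = -h^2/2 + -(h * cv p) by ring,
        Real.exp_add, Real.exp_add]
      ring
    | succ k ih =>
      obtain ⟨s, hsC, hs⟩ := ih
      obtain ⟨s', hs'C, hds⟩ := myCone_hasDerivAt hsC
      refine ⟨fun h c => (1/2) * (s' h c + (k:ℝ) * (c * s h c)),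
        MyCone.smul _ (by norm_num)
          (MyCone.add hs'C (MyCone.smul _ (Nat.cast_nonneg k) (MyCone.mulc hsC))), ?_⟩
      intro p hp
      have hc0 : 0 < cv p := cv_pos hcv hp
      -- choose ε
      have hev : ∀ᶠ q in nhds p, cv q ∈ Set.Ioo (cv p / 2) (cv p + 1) ∧ q ∈ Set.Ioo (0:ℝ) 1 := by
        have h1 : ∀ᶠ q in nhds p, cv q ∈ Set.Ioo (cv p / 2) (cv p + 1) :=
          (cv_continuousAt hcv hp).eventually_mem
            (Ioo_mem_nhds (by linarith) (by linarith))
        have h2 : ∀ᶠ q in nhds p, q ∈ Set.Ioo (0:ℝ) 1 := isOpen_Ioo.mem_nhds hp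
        exact h1.and h2
      obtain ⟨ε, hε, hball⟩ := Metric.eventually_nhds_iff_ball.mp hev
      -- data for dominated differentiation
      obtain ⟨M, K, hM, hb⟩ := myCone_bound
        (MyCone.smul _ (by norm_num : (0:ℝ) ≤ 1/2)
          (MyCone.add hs'C (MyCone.smul _ (Nat.cast_nonneg k) (MyCone.mulc hsC))))
        (cv p + 1) (by linarith)
      obtain ⟨M', hM', hgb⟩ := global_bound M K (cv p + 1) hM (by linarith)
      set s₁ : ℝ → ℝ → ℝ := fun h c => (1/2) * (s' h c + (k:ℝ) * (c * s h c)) with hs₁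
      set D : ℝ := ((stdNormalPdf (cv p + 1))⁻¹) ^ (k+1) with hD
      have hDpos : 0 ≤ D := pow_nonneg (inv_nonneg.mpr (pdf_pos _).le) _
      set F : ℝ → ℝ → ℝ :=
        fun q h => Real.exp (-h^2/2) * s h (cv q) * ((stdNormalPdf (cv q))⁻¹) ^ k with hF
      set F' : ℝ → ℝ → ℝ :=
        fun q h => -(Real.exp (-h^2/2) * s₁ h (cv q) * ((stdNormalPdf (cv q))⁻¹) ^ (k+1)) with hF'
      have key : HasDerivAt (fun q => ∫ h, F q h ∂Pi) (∫ h, F' p h ∂Pi) p := by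
        refine (hasDerivAt_integral_of_dominated_loc_of_deriv_le (Metric.ball_mem_nhds p hε)
          (F' := F') (bound := fun _ => M' * D)
          (Filter.Eventually.of_forall fun q => (cont_h hsC (cv q) k).aestronglyMeasurable)
          (integrand_int hsC (cv p) hc0.le k)
          ?hF'meas ?hbound (integrable_const _) ?hdiff).2
        case hF'meas =>
          have hc1 : Continuous (fun h : ℝ =>
              Real.exp (-h^2/2) * s₁ h (cv p) * ((stdNormalPdf (cv p))⁻¹) ^ (k+1)) :=
            cont_h (MyCone.smul _ (by norm_num : (0:ℝ) ≤ 1/2)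
              (MyCone.add hs'C (MyCone.smul _ (Nat.cast_nonneg k) (MyCone.mulc hsC))))
              (cv p) (k+1)
          exact (hc1.neg).aestronglyMeasurable
        case hbound =>
          refine Filter.Eventually.of_forall fun h => fun q hq => ?_
          obtain ⟨⟨hcvlo, hcvhi⟩, hqIoo⟩ := hball q (Metric.mem_ball.mp hq)
          have hcq0 : 0 ≤ cv q := by linarith
          have habs : ‖F' q h‖ = Real.exp (-h^2/2) * |s₁ h (cv q)| * ((stdNormalPdf (cv q))⁻¹) ^ (k+1) := by
            rw [Real.norm_eq_abs, abs_neg, abs_mul, abs_mul, abs_of_nonneg (Real.exp_pos _).le,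
              abs_of_nonneg (pow_nonneg (inv_nonneg.mpr (pdf_pos (cv q)).le) (k+1))]
          rw [habs]
          have h2 : Real.exp (-h^2/2) * |s₁ h (cv q)| ≤ M' := by
            have := hb h (cv q) hcq0 (by linarith)
            calc Real.exp (-h^2/2) * |s₁ h (cv q)|
                ≤ Real.exp (-h^2/2) * (M * (1+h^2)^K * Real.exp ((cv p + 1)*|h|)) :=
                  mul_le_mul_of_nonneg_left this (Real.exp_pos _).le
              _ = M * (1+h^2)^K * Real.exp ((cv p + 1)*|h|) * Real.exp (-h^2/2) := by ring
              _ ≤ M' := hgb h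
          have h3 : ((stdNormalPdf (cv q))⁻¹) ^ (k+1) ≤ D := by
            rw [hD]
            apply pow_le_pow_left₀ (inv_nonneg.mpr (pdf_pos _).le)
            apply inv_anti₀ (pdf_pos _)
            exact pdf_anti hcq0 (by linarith)
          calc Real.exp (-h^2/2) * |s₁ h (cv q)| * ((stdNormalPdf (cv q))⁻¹) ^ (k+1)
              ≤ M' * ((stdNormalPdf (cv q))⁻¹) ^ (k+1) :=
                mul_le_mul_of_nonneg_right h2 (pow_nonneg (inv_nonneg.mpr (pdf_pos _).le) _)
            _ ≤ M' * D := mul_le_mul_of_nonneg_left h3 hM'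
        case hdiff =>
          refine Filter.Eventually.of_forall fun h => fun q hq => ?_
          obtain ⟨⟨hcvlo, hcvhi⟩, hqIoo⟩ := hball q (Metric.mem_ball.mp hq)
          have hcvd : HasDerivAt cv (-(2 * stdNormalPdf (cv q)))⁻¹ q := cv_hasDerivAt hcv hqIoo
          have hGs : HasDerivAt (fun x => s h x * ((stdNormalPdf x)⁻¹) ^ k)
              (s' h (cv q) * ((stdNormalPdf (cv q))⁻¹) ^ k
                + s h (cv q) * ((k:ℝ) * (cv q) * ((stdNormalPdf (cv q))⁻¹) ^ k)) (cv q) :=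
            (hds h (cv q)).mul (inv_pdf_pow_hasDerivAt k (cv q))
          have hG : HasDerivAt
              (fun x => Real.exp (-h^2/2) * (s h x * ((stdNormalPdf x)⁻¹) ^ k))
              (Real.exp (-h^2/2) * (s' h (cv q) * ((stdNormalPdf (cv q))⁻¹) ^ k
                + s h (cv q) * ((k:ℝ) * (cv q) * ((stdNormalPdf (cv q))⁻¹) ^ k))) (cv q) :=
            hGs.const_mul _
          have hcomp := hG.comp q hcvd
          have heq1 : (fun q => F q h)
              = (fun x => Real.exp (-h^2/2) * (s h x * ((stdNormalPdf x)⁻¹) ^ k)) ∘ cv := by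
            funext q; simp only [hF, Function.comp]; ring
          rw [heq1]
          refine hcomp.congr_deriv ?_
          -- value equality
          have hpd : stdNormalPdf (cv q) ≠ 0 := (pdf_pos _).ne'
          rw [hF', hs₁]
          have hinv2 : (-(2 * stdNormalPdf (cv q)))⁻¹ = -((1:ℝ)/2) * (stdNormalPdf (cv q))⁻¹ := by
            field_simp
          rw [hinv2, pow_succ]
          field_simp
          ring_nf
          simp [hpd]
      -- assemble
      have hev2 : iteratedDeriv k g₂ =ᶠ[nhds p] fun q => (-1:ℝ)^k * ∫ h, F q h ∂Pi := by
        have : Set.Ioo (0:ℝ) 1 ∈ nhds p := isOpen_Ioo.mem_nhds hp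
        filter_upwards [this] with q hq
        exact hs q hq
      rw [iteratedDeriv_succ, hev2.deriv_eq, ((key.const_mul ((-1:ℝ)^k)).deriv)]
      have : (∫ h, F' p h ∂Pi)
          = -∫ h, Real.exp (-h^2/2) * s₁ h (cv p) * ((stdNormalPdf (cv p))⁻¹) ^ (k+1) ∂Pi := by
        rw [← integral_neg]
      rw [this]
      rw [pow_succ]
      ring
  -- conclude
  intro k p hp
  obtain ⟨s, hsC, hs⟩ := main k
  rw [hs p hp, ← mul_assoc, ← pow_add]
  have heven : Even (k + k) := ⟨k, rfl⟩
  rw [heven.neg_one_pow, one_mul]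
  apply integral_nonneg
  intro h
  have h1 : 0 ≤ s h (cv p) := myCone_nonneg hsC h (cv p) (cv_pos hcv hp).le
  exact mul_nonneg (mul_nonneg (Real.exp_pos _).le h1)
    (pow_nonneg (inv_nonneg.mpr (pdf_pos _).le) _)
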